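/- Let P be a Markov kernel on a measurable space E, let A ⊆ E be measurable, and let g : E → ℝ be bounded measurable with 0 ≤ g ≤ 1 and g(x) = 0 for every x ∈ A. Suppose (w, λ) is a bounded MPE solution for g with λ = 1. Then for every x ∈ E and every n ≥ 1, E_x[ exp( −Σ_{i=0}^{n−1} 𝟙_A(x_i) ) ] ≥ e^{w(x) − ‖w‖}, where E_x is the expectation for the chain started at x. Consequently, under the trajectory measure ℙ_x, the total number of visits of the chain to A is finite with positive probability: ℙ_x[ Σ_{i=0}^{∞} 𝟙_A(x_i) < ∞ ] > 0 for every x ∈ E. -/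

import Mathlib

open MeasureTheory ProbabilityTheory

/-- If `traj x` is the Ionescu–Tulcea trajectory law of the Markov chain with kernel `P`
started at `x` (characterized by the recursion
`traj x = ∫ P(x,dy) [law of (x, ω₀, ω₁, …) with ω ~ traj y]`), `0 ≤ g ≤ 1` with `g = 0` on
`A`, and `(w, lam)` is a bounded MPE solution for `g` with `lam = 1`, then for every `x`
and `n ≥ 1`, `E_x[exp(-Σ_{i<n} 𝟙_A(x_i))] ≥ e^{w(x) - ‖w‖}`; consequently the chain visits
`A` only finitely often with positive probability, from every starting point. -/
theorem finite_visits_of_mpe_value_one {E : Type*} [MeasurableSpace E]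
    (P : Kernel E E) [IsMarkovKernel P]
    (traj : E → Measure (ℕ → E)) (htraj_prob : ∀ x, IsProbabilityMeasure (traj x))
    (htraj : ∀ x : E, traj x
      = (P x).bind fun y =>
          (traj y).map (fun ω => fun n => Nat.casesOn n x (fun m => ω m)))
    (A : Set E) (hA : MeasurableSet A)
    (g : E → ℝ) (hg_meas : Measurable g)
    (hg_nonneg : ∀ y, 0 ≤ g y) (hg_le_one : ∀ y, g y ≤ 1)
    (hgA : ∀ y ∈ A, g y = 0)
    (w : E → ℝ) (hw_meas : Measurable w) (Cw : ℝ) (hw_bdd : ∀ y, |w y| ≤ Cw)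
    (hMPE : ∀ y : E, w y = g y - 1 + Real.log (∫ z, Real.exp (w z) ∂(P y))) :
    (∀ x : E, ∀ n : ℕ, 1 ≤ n →
      Real.exp (w x - ⨆ y, |w y|)
        ≤ ∫ ω : ℕ → E,
            Real.exp (-(∑ i ∈ Finset.range n, Set.indicator A (fun _ => (1 : ℝ)) (ω i)))
            ∂(traj x)) ∧
    (∀ x : E, 0 < (traj x) {ω : ℕ → E | {i : ℕ | ω i ∈ A}.Finite}) := by
  haveI := htraj_prob
  -- the prepending map
  set c : E → (ℕ → E) → (ℕ → E) :=
    fun x ω => fun n => Nat.casesOn n x (fun m => ω m) with hc_def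
  have hc_meas : ∀ x, Measurable (c x) := by
    intro x
    apply measurable_pi_lambda
    intro n
    cases n with
    | zero => exact measurable_const
    | succ m => exact measurable_pi_apply m
  -- the kernel from the bind is a.e.-measurable (else the bind would be zero)
  have hae : ∀ x : E, AEMeasurable (fun y => (traj y).map (c x)) (P x) := by
    intro x
    by_contra h
    have h0 := htraj x
    rw [Measure.bind, Measure.map_of_not_aemeasurable h, Measure.join_zero] at h0
    have h1 := (htraj_prob x).measure_univ
    rw [h0] at h1
    simp at h1
  -- integration step lemma
  have hstep : ∀ (x : E) (F : (ℕ → E) → ENNReal), Measurable F →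
      ∫⁻ ω, F ω ∂(traj x) = ∫⁻ y, ∫⁻ ω, F (c x ω) ∂(traj y) ∂(P x) := by
    intro x F hF
    conv_lhs => rw [htraj x]
    rw [Measure.bind,
      Measure.lintegral_join hF.aemeasurable,
      lintegral_map' (Measure.measurable_lintegral hF).aemeasurable (hae x)]
    refine lintegral_congr fun y => ?_
    exact lintegral_map hF (hc_meas x)
  -- positivity of the exponential moment
  have hIpos : ∀ y : E, 0 < ∫ z, Real.exp (w z) ∂(P y) := by
    intro y
    have hint : Integrable (fun z => Real.exp (w z)) (P y) := by
      refine (integrable_const (Real.exp Cw)).mono'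
        (Real.measurable_exp.comp hw_meas).aestronglyMeasurable
        (Filter.Eventually.of_forall fun z => ?_)
      rw [Real.norm_eq_abs, abs_of_nonneg (Real.exp_pos _).le]
      exact Real.exp_le_exp.2 ((le_abs_self _).trans (hw_bdd z))
    have hlow : Real.exp (-Cw) ≤ ∫ z, Real.exp (w z) ∂(P y) := by
      calc Real.exp (-Cw) = ∫ _, Real.exp (-Cw) ∂(P y) := by simp
        _ ≤ ∫ z, Real.exp (w z) ∂(P y) := by
            refine integral_mono (integrable_const _) hint fun z => ?_
            exact Real.exp_le_exp.2 ((neg_le_neg (hw_bdd z)).trans (neg_abs_le _))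
    exact lt_of_lt_of_le (Real.exp_pos _) hlow
  have hPexp : ∀ y : E, ∫ z, Real.exp (w z) ∂(P y) = Real.exp (w y - g y + 1) := by
    intro y
    have h1 : Real.log (∫ z, Real.exp (w z) ∂(P y)) = w y - g y + 1 := by
      have := hMPE y; linarith
    rw [← Real.exp_log (hIpos y), h1]
  have hexp_int : ∀ y : E, Integrable (fun z => Real.exp (w z)) (P y) := by
    intro y
    refine (integrable_const (Real.exp Cw)).mono'
      (Real.measurable_exp.comp hw_meas).aestronglyMeasurable
      (Filter.Eventually.of_forall fun z => ?_)
    rw [Real.norm_eq_abs, abs_of_nonneg (Real.exp_pos _).le]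
    exact Real.exp_le_exp.2 ((le_abs_self _).trans (hw_bdd z))
  -- ENNReal version of the exponential moment
  have hPexp' : ∀ y : E, ∫⁻ z, ENNReal.ofReal (Real.exp (w z)) ∂(P y)
      = ENNReal.ofReal (Real.exp (w y - g y + 1)) := by
    intro y
    rw [← ofReal_integral_eq_lintegral_ofReal (hexp_int y)
      (Filter.Eventually.of_forall fun z => (Real.exp_pos _).le), hPexp y]
  -- the key martingale identity
  have hkey : ∀ (n : ℕ) (x : E),
      ∫⁻ ω, ENNReal.ofReal (Real.exp ((∑ i ∈ Finset.range n, (g (ω i) - 1)) + w (ω n)))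
          ∂(traj x)
        = ENNReal.ofReal (Real.exp (w x)) := by
    intro n
    induction n with
    | zero =>
      intro x
      have hF : Measurable fun ω : ℕ → E =>
          ENNReal.ofReal (Real.exp ((∑ i ∈ Finset.range 0, (g (ω i) - 1)) + w (ω 0))) := by
        apply ENNReal.measurable_ofReal.comp
        apply Real.measurable_exp.comp
        exact (Finset.measurable_sum _ fun i _ =>
          ((hg_meas.comp (measurable_pi_apply i)).sub measurable_const)).add
          (hw_meas.comp (measurable_pi_apply 0))
      rw [hstep x _ hF]
      have : ∀ y : E, ∫⁻ ω, ENNReal.ofReal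
          (Real.exp ((∑ i ∈ Finset.range 0, (g ((c x ω) i) - 1)) + w ((c x ω) 0)))
          ∂(traj y) = ENNReal.ofReal (Real.exp (w x)) := by
        intro y
        have h0 : ∀ ω : ℕ → E, c x ω 0 = x := fun _ => rfl
        simp [h0, lintegral_const]
      rw [lintegral_congr this]
      simp
    | succ n ih =>
      intro x
      have hF : Measurable fun ω : ℕ → E =>
          ENNReal.ofReal (Real.exp ((∑ i ∈ Finset.range (n+1), (g (ω i) - 1)) + w (ω (n+1)))) := by
        apply ENNReal.measurable_ofReal.comp
        apply Real.measurable_exp.comp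
        exact (Finset.measurable_sum _ fun i _ =>
          ((hg_meas.comp (measurable_pi_apply i)).sub measurable_const)).add
          (hw_meas.comp (measurable_pi_apply (n+1)))
      rw [hstep x _ hF]
      have hinner : ∀ y : E, ∫⁻ ω, ENNReal.ofReal
          (Real.exp ((∑ i ∈ Finset.range (n+1), (g ((c x ω) i) - 1)) + w ((c x ω) (n+1))))
          ∂(traj y)
          = ENNReal.ofReal (Real.exp (w y)) * ENNReal.ofReal (Real.exp (g x - 1)) := by
        intro y
        have hcongr : ∀ ω : ℕ → E,
            ENNReal.ofReal
              (Real.exp ((∑ i ∈ Finset.range (n+1), (g ((c x ω) i) - 1)) + w ((c x ω) (n+1))))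
            = ENNReal.ofReal
              (Real.exp ((∑ i ∈ Finset.range n, (g (ω i) - 1)) + w (ω n)))
              * ENNReal.ofReal (Real.exp (g x - 1)) := by
          intro ω
          have hsum : ∑ i ∈ Finset.range (n+1), (g ((c x ω) i) - 1)
              = (∑ i ∈ Finset.range n, (g (ω i) - 1)) + (g x - 1) := by
            rw [Finset.sum_range_succ']
            rfl
          have hlast : (c x ω) (n+1) = ω n := rfl
          rw [hsum, hlast, ← ENNReal.ofReal_mul (Real.exp_pos _).le, ← Real.exp_add]
          exact congrArg (fun t => ENNReal.ofReal (Real.exp t)) (by ring)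
        rw [lintegral_congr hcongr, lintegral_mul_const' _ _ (by simp), ih y]
      rw [lintegral_congr hinner, lintegral_mul_const' _ _ (by simp), hPexp' x,
        ← ENNReal.ofReal_mul (Real.exp_pos _).le, ← Real.exp_add]
      exact congrArg (fun t => ENNReal.ofReal (Real.exp t)) (by ring)
  -- notation for the sum of indicators
  set S : ℕ → (ℕ → E) → ℝ :=
    fun n ω => ∑ i ∈ Finset.range n, Set.indicator A (fun _ => (1 : ℝ)) (ω i) with hS_def
  have hS_meas : ∀ n, Measurable (S n) := by
    intro n
    exact Finset.measurable_sum _ fun i _ =>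
      (measurable_const.indicator hA).comp (measurable_pi_apply i)
  have hS_nonneg : ∀ n ω, 0 ≤ S n ω := by
    intro n ω
    exact Finset.sum_nonneg fun i _ => Set.indicator_nonneg (fun _ _ => zero_le_one) _
  have hf_meas : ∀ n, Measurable (fun ω : ℕ → E => Real.exp (-(S n ω))) := by
    intro n
    exact Real.measurable_exp.comp (hS_meas n).neg
  have hf_int : ∀ (x : E) (n : ℕ), Integrable (fun ω => Real.exp (-(S n ω))) (traj x) := by
    intro x n
    refine (integrable_const (1 : ℝ)).mono' (hf_meas n).aestronglyMeasurable
      (Filter.Eventually.of_forall fun ω => ?_)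
    rw [Real.norm_eq_abs, abs_of_nonneg (Real.exp_pos _).le, Real.exp_le_one_iff]
    linarith [hS_nonneg n ω]
  -- the supremum of |w|
  set M : ℝ := ⨆ y, |w y| with hM_def
  have hwM : ∀ y, |w y| ≤ M := by
    intro y
    exact le_ciSup ⟨Cw, Set.forall_mem_range.2 hw_bdd⟩ y
  -- Part 1
  have part1 : ∀ (x : E) (n : ℕ),
      Real.exp (w x - M) ≤ ∫ ω, Real.exp (-(S n ω)) ∂(traj x) := by
    intro x n
    have hpt : ∀ ω : ℕ → E,
        Real.exp ((∑ i ∈ Finset.range n, (g (ω i) - 1)) + w (ω n))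
          ≤ Real.exp (-(S n ω)) * Real.exp M := by
      intro ω
      rw [← Real.exp_add, Real.exp_le_exp]
      have h1 : (∑ i ∈ Finset.range n, (g (ω i) - 1)) ≤ -(S n ω) := by
        rw [hS_def, ← Finset.sum_neg_distrib]
        refine Finset.sum_le_sum fun i _ => ?_
        by_cases hmem : ω i ∈ A
        · rw [Set.indicator_of_mem hmem, hgA _ hmem]; norm_num
        · rw [Set.indicator_of_notMem hmem]
          simp [hg_le_one (ω i)]
      have h2 : w (ω n) ≤ M := (le_abs_self _).trans (hwM (ω n))
      linarith
    have hchain : ENNReal.ofReal (Real.exp (w x))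
        ≤ ENNReal.ofReal ((∫ ω, Real.exp (-(S n ω)) ∂(traj x)) * Real.exp M) := by
      calc ENNReal.ofReal (Real.exp (w x))
          = ∫⁻ ω, ENNReal.ofReal
              (Real.exp ((∑ i ∈ Finset.range n, (g (ω i) - 1)) + w (ω n))) ∂(traj x) :=
            (hkey n x).symm
        _ ≤ ∫⁻ ω, ENNReal.ofReal (Real.exp (-(S n ω)) * Real.exp M) ∂(traj x) :=
            lintegral_mono fun ω => ENNReal.ofReal_le_ofReal (hpt ω)
        _ = ∫⁻ ω, ENNReal.ofReal (Real.exp (-(S n ω))) * ENNReal.ofReal (Real.exp M)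
              ∂(traj x) := by
            refine lintegral_congr fun ω => ?_
            rw [ENNReal.ofReal_mul (Real.exp_pos _).le]
        _ = (∫⁻ ω, ENNReal.ofReal (Real.exp (-(S n ω))) ∂(traj x))
              * ENNReal.ofReal (Real.exp M) := lintegral_mul_const' _ _ (by simp)
        _ = ENNReal.ofReal (∫ ω, Real.exp (-(S n ω)) ∂(traj x)) * ENNReal.ofReal (Real.exp M) := by
            rw [← ofReal_integral_eq_lintegral_ofReal (hf_int x n)
              (Filter.Eventually.of_forall fun ω => (Real.exp_pos _).le)]
        _ = ENNReal.ofReal ((∫ ω, Real.exp (-(S n ω)) ∂(traj x)) * Real.exp M) := by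
            rw [ENNReal.ofReal_mul]
            exact integral_nonneg fun ω => (Real.exp_pos _).le
    have hineq : Real.exp (w x)
        ≤ (∫ ω, Real.exp (-(S n ω)) ∂(traj x)) * Real.exp M := by
      have hnn : 0 ≤ (∫ ω, Real.exp (-(S n ω)) ∂(traj x)) * Real.exp M :=
        mul_nonneg (integral_nonneg fun ω => (Real.exp_pos _).le) (Real.exp_pos _).le
      exact (ENNReal.ofReal_le_ofReal_iff hnn).1 hchain
    rw [Real.exp_sub, div_le_iff₀ (Real.exp_pos M)]
    exact hineq
  refine ⟨fun x n _ => part1 x n, fun x => ?_⟩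
  -- Part 2
  by_contra hcon
  push_neg at hcon
  have h0 : (traj x) {ω : ℕ → E | {i : ℕ | ω i ∈ A}.Finite} = 0 := le_antisymm hcon bot_le
  have hae_inf : ∀ᵐ ω ∂(traj x), ({i : ℕ | ω i ∈ A}).Infinite := by
    rw [ae_iff]
    convert h0 using 2
    ext ω
    simp [Set.not_infinite]
  -- a.e. the sums tend to infinity
  have hlim : ∀ᵐ ω ∂(traj x),
      Filter.Tendsto (fun n => Real.exp (-(S n ω))) Filter.atTop (nhds 0) := by
    refine hae_inf.mono fun ω hω => ?_
    have hS_tendsto : Filter.Tendsto (fun n => S n ω) Filter.atTop Filter.atTop := by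
      rw [Filter.tendsto_atTop_atTop]
      intro b
      obtain ⟨t, hts, htfin, htcard⟩ := hω.exists_subset_ncard_eq ⌈b⌉₊
      refine ⟨htfin.toFinset.sup id + 1, fun n hn => ?_⟩
      have hsub : htfin.toFinset ⊆ Finset.range n := by
        intro i hi
        rw [Finset.mem_range]
        have : i ≤ htfin.toFinset.sup id := Finset.le_sup (f := id) hi
        omega
      have hsumt : (b : ℝ) ≤ ∑ i ∈ htfin.toFinset,
          Set.indicator A (fun _ => (1 : ℝ)) (ω i) := by
        have hone : ∀ i ∈ htfin.toFinset, Set.indicator A (fun _ => (1 : ℝ)) (ω i) = 1 := by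
          intro i hi
          rw [Set.Finite.mem_toFinset] at hi
          exact Set.indicator_of_mem (show ω i ∈ A from hts hi) (fun _ => (1:ℝ))
        rw [Finset.sum_congr rfl hone, Finset.sum_const, nsmul_eq_mul, mul_one]
        rw [← Set.ncard_coe_finset, Set.Finite.coe_toFinset, htcard]
        exact Nat.le_ceil b
      refine hsumt.trans ?_
      exact Finset.sum_le_sum_of_subset_of_nonneg hsub fun i _ _ =>
        Set.indicator_nonneg (fun _ _ => zero_le_one) _
    exact Real.tendsto_exp_neg_atTop_nhds_zero.comp hS_tendsto
  have htend : Filter.Tendsto (fun n => ∫ ω, Real.exp (-(S n ω)) ∂(traj x))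
      Filter.atTop (nhds (∫ _ω, (0 : ℝ) ∂(traj x))) := by
    refine tendsto_integral_of_dominated_convergence (fun _ => (1 : ℝ))
      (fun n => (hf_meas n).aestronglyMeasurable) (integrable_const 1)
      (fun n => Filter.Eventually.of_forall fun ω => ?_) hlim
    rw [Real.norm_eq_abs, abs_of_nonneg (Real.exp_pos _).le, Real.exp_le_one_iff]
    linarith [hS_nonneg n ω]
  rw [integral_zero] at htend
  have hle : Real.exp (w x - M) ≤ 0 :=
    ge_of_tendsto htend (Filter.Eventually.of_forall fun n => part1 x n)
  linarith [Real.exp_pos (w x - M)]
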